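/- arXiv:1608.03116 — 2 statements merged into one kernel-verified Lean document; each statement's English description precedes it below -/
import Mathlib

section
/- Let S be a finite semilattice indecomposable semigroup (not necessarily with zero). If Y is a subsemilattice of S, then |Y| ≤ 2⌊(|S| − 1)/4⌋ + 1. -/
universe u

/-- A semigroup is semilattice indecomposable if every semigroup homomorphism from it to a
semilattice (a commutative idempotent semigroup) is constant. -/
def SemilatticeIndecomposable (S : Type u) [Semigroup S] : Prop :=
  ∀ (T : Type u) [Semigroup T],
    (∀ a b : T, a * b = b * a) → (∀ a : T, a * a = a) →
      ∀ f : S →ₙ* T, ∀ x y : S, f x = f y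

/-- A subsemilattice of a semigroup: a subsemigroup consisting of pairwise commuting
idempotents. -/
def IsSubsemilattice {S : Type u} [Mul S] (Y : Set S) : Prop :=
  (∀ a ∈ Y, ∀ b ∈ Y, a * b ∈ Y) ∧ (∀ a ∈ Y, a * a = a) ∧
    (∀ a ∈ Y, ∀ b ∈ Y, a * b = b * a)

section
variable {S : Type u} [Semigroup S]

/-- x^(n+1) -/
def pw (x : S) : ℕ → S
  | 0 => x
  | n+1 => pw x n * x

lemma pw_succ (x : S) (n : ℕ) : pw x (n+1) = pw x n * x := rfl

lemma pw_comm (x : S) (n : ℕ) : pw x n * x = x * pw x n := by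
  induction n with
  | zero => rfl
  | succ n ih => rw [pw_succ, ih, mul_assoc, ih]

lemma pw_succ' (x : S) (n : ℕ) : pw x (n+1) = x * pw x n := by
  rw [pw_succ, pw_comm]

lemma pw_add (x : S) (m n : ℕ) : pw x (m + n + 1) = pw x m * pw x n := by
  induction n with
  | zero => rfl
  | succ n ih => rw [show m + (n+1) + 1 = (m+n+1)+1 by ring, pw_succ, ih, pw_succ, mul_assoc]

end
section
variable {S : Type u} [Semigroup S]

lemma pw_shift [Finite S] (x : S) : ∃ i d, 1 ≤ d ∧ ∀ r, pw x (i + r + d) = pw x (i + r) := by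
  obtain ⟨a, b, hab, h⟩ : ∃ a b : ℕ, a ≠ b ∧ pw x a = pw x b := by
    obtain ⟨a, b, hab, h⟩ := Finite.exists_ne_map_eq_of_infinite (pw x)
    exact ⟨a, b, hab, h⟩
  rcases Nat.lt_or_ge a b with hlt | hge
  · refine ⟨a, b - a, by omega, ?_⟩
    intro r
    induction r with
    | zero => rw [show a + 0 + (b-a) = b by omega, show a + 0 = a by omega]; exact h.symm
    | succ n ih =>
      have e1 : a + (n+1) + (b-a) = (a + (b-a)) + n + 1 := by omega
      have e2 : a + (n+1) = a + n + 1 := by omega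
      rw [e1, pw_add, show a + (b-a) = b by omega, ← h, e2, pw_add]
  · have hlt : b < a := by omega
    refine ⟨b, a - b, by omega, ?_⟩
    intro r
    induction r with
    | zero => rw [show b + 0 + (a-b) = a by omega, show b + 0 = b by omega]; exact h
    | succ n ih =>
      have e1 : b + (n+1) + (a-b) = (b + (a-b)) + n + 1 := by omega
      have e2 : b + (n+1) = b + n + 1 := by omega
      rw [e1, pw_add, show b + (a-b) = a by omega, h, e2, pw_add]

lemma exists_idem_pw [Finite S] (x : S) : ∃ n, pw x n * pw x n = pw x n := by
  obtain ⟨i, d, hd, hshift⟩ := pw_shift x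
  have hmulti : ∀ k r, pw x (i + r + k * d) = pw x (i + r) := by
    intro k
    induction k with
    | zero => simp
    | succ n ih =>
      intro r
      have e1 : i + r + (n+1) * d = i + (r + n*d) + d := by ring
      rw [e1, hshift, show i + (r + n*d) = i + r + n*d by ring, ih]
  obtain ⟨A, hA1, hA2⟩ : ∃ A, A = (i+1) * d ∧ i+1 ≤ A :=
    ⟨(i+1)*d, rfl, by calc i+1 = (i+1)*1 := by ring
                      _ ≤ (i+1)*d := Nat.mul_le_mul_left _ hd⟩
  refine ⟨A - 1, ?_⟩
  calc pw x (A-1) * pw x (A-1) = pw x ((A-1) + (A-1) + 1) := (pw_add x _ _).symm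
    _ = pw x (i + ((A-1) - i) + (i+1) * d) := by rw [← hA1]; congr 1; omega
    _ = pw x (i + ((A-1) - i)) := hmulti (i+1) _
    _ = pw x (A-1) := by congr 1; omega

end
section
variable {S : Type u} [Semigroup S]

/-- a ∈ bS¹ -/
def rdvd (a b : S) : Prop := a = b ∨ ∃ s, a = b * s
/-- a ∈ S¹b -/
def ldvd (a b : S) : Prop := a = b ∨ ∃ s, a = s * b
/-- a ∈ S¹bS¹ : a is J-below b -/
def jdvd (a b : S) : Prop :=
  a = b ∨ (∃ s, a = b * s) ∨ (∃ s, a = s * b) ∨ (∃ s t, a = s * b * t)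
/-- Green R equivalence -/
def RR (a b : S) : Prop := rdvd a b ∧ rdvd b a
/-- Green L equivalence -/
def LL (a b : S) : Prop := ldvd a b ∧ ldvd b a
/-- e = p x q with p q ∈ S : e is J-above x, two-sided witnesses -/
def dvd2 (e x : S) : Prop := ∃ p q, e = p * x * q

lemma rdvd_refl (a : S) : rdvd a a := Or.inl rfl
lemma ldvd_refl (a : S) : ldvd a a := Or.inl rfl
lemma jdvd_refl (a : S) : jdvd a a := Or.inl rfl

lemma rdvd_trans {a b c : S} (h1 : rdvd a b) (h2 : rdvd b c) : rdvd a c := by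
  rcases h1 with rfl | ⟨s, rfl⟩ <;> rcases h2 with rfl | ⟨t, rfl⟩
  · exact Or.inl rfl
  · exact Or.inr ⟨t, rfl⟩
  · exact Or.inr ⟨s, rfl⟩
  · exact Or.inr ⟨t * s, by rw [mul_assoc]⟩

lemma ldvd_trans {a b c : S} (h1 : ldvd a b) (h2 : ldvd b c) : ldvd a c := by
  rcases h1 with rfl | ⟨s, rfl⟩ <;> rcases h2 with rfl | ⟨t, rfl⟩
  · exact Or.inl rfl
  · exact Or.inr ⟨t, rfl⟩
  · exact Or.inr ⟨s, rfl⟩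
  · exact Or.inr ⟨s * t, by rw [mul_assoc]⟩

lemma rdvd.jdvd {a b : S} (h : rdvd a b) : jdvd a b := by
  rcases h with rfl | ⟨s, rfl⟩
  · exact Or.inl rfl
  · exact Or.inr (Or.inl ⟨s, rfl⟩)

lemma ldvd.jdvd {a b : S} (h : ldvd a b) : jdvd a b := by
  rcases h with rfl | ⟨s, rfl⟩
  · exact Or.inl rfl
  · exact Or.inr (Or.inr (Or.inl ⟨s, rfl⟩))

lemma dvd2.jdvd {e x : S} (h : dvd2 e x) : jdvd e x := by
  obtain ⟨p, q, rfl⟩ := h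
  exact Or.inr (Or.inr (Or.inr ⟨p, q, rfl⟩))

lemma jdvd_mul_left {a b : S} (s : S) (h : jdvd a b) : jdvd (s * a) b := by
  rcases h with rfl | ⟨u, rfl⟩ | ⟨u, rfl⟩ | ⟨u, v, rfl⟩
  · exact Or.inr (Or.inr (Or.inl ⟨s, rfl⟩))
  · exact Or.inr (Or.inr (Or.inr ⟨s, u, by simp [mul_assoc]⟩))
  · exact Or.inr (Or.inr (Or.inl ⟨s * u, by simp [mul_assoc]⟩))
  · exact Or.inr (Or.inr (Or.inr ⟨s * u, v, by simp [mul_assoc]⟩))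

lemma jdvd_mul_right {a b : S} (s : S) (h : jdvd a b) : jdvd (a * s) b := by
  rcases h with rfl | ⟨u, rfl⟩ | ⟨u, rfl⟩ | ⟨u, v, rfl⟩
  · exact Or.inr (Or.inl ⟨s, rfl⟩)
  · exact Or.inr (Or.inl ⟨u * s, by simp [mul_assoc]⟩)
  · exact Or.inr (Or.inr (Or.inr ⟨u, s, by simp [mul_assoc]⟩))
  · exact Or.inr (Or.inr (Or.inr ⟨u, v * s, by simp [mul_assoc]⟩))

lemma jdvd_trans {a b c : S} (h1 : jdvd a b) (h2 : jdvd b c) : jdvd a c := by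
  rcases h1 with rfl | ⟨s, rfl⟩ | ⟨s, rfl⟩ | ⟨s, t, rfl⟩
  · exact h2
  · exact jdvd_mul_right s h2
  · exact jdvd_mul_left s h2
  · exact jdvd_mul_right t (jdvd_mul_left s h2)

end
section
variable {S : Type u} [Semigroup S]

lemma sandwich {f a b : S} (h : f = a * f * b) : ∀ n, f = pw a n * f * pw b n := by
  intro n
  induction n with
  | zero => exact h
  | succ n ih =>
    calc f = a * f * b := h
      _ = a * (pw a n * f * pw b n) * b := by rw [← ih]
      _ = (a * pw a n) * f * (pw b n * b) := by simp [mul_assoc]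
      _ = pw a (n+1) * f * pw b (n+1) := by rw [pw_succ', pw_succ]

lemma eat_right {f a b : S} (hfab : f = a * f * b) {n : ℕ}
    (hidem : pw b n * pw b n = pw b n) : f = f * pw b n := by
  have h1 : f = pw a n * f * pw b n := sandwich hfab n
  calc f = pw a n * f * pw b n := h1
    _ = pw a n * f * (pw b n * pw b n) := by rw [hidem]
    _ = (pw a n * f * pw b n) * pw b n := by simp [mul_assoc]
    _ = f * pw b n := by rw [← h1]

lemma eat_left {f a b : S} (hfab : f = a * f * b) {n : ℕ}
    (hidem : pw a n * pw a n = pw a n) : f = pw a n * f := by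
  have h1 : f = pw a n * f * pw b n := sandwich hfab n
  calc f = pw a n * f * pw b n := h1
    _ = (pw a n * pw a n) * f * pw b n := by rw [hidem]
    _ = pw a n * (pw a n * f * pw b n) := by simp [mul_assoc]
    _ = pw a n * f := by rw [← h1]

/-- Stability, R version: if u ∈ vS¹ and v ∈ S¹uS¹ then v ∈ uS¹. -/
lemma stabR [Finite S] {u v : S} (h1 : rdvd u v) (h2 : jdvd v u) : rdvd v u := by
  rcases h1 with rfl | ⟨s, hs⟩
  · exact rdvd_refl _
  rcases h2 with rfl | ⟨w, hw⟩ | ⟨w, hw⟩ | ⟨w, w', hww⟩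
  · exact Or.inl rfl
  · exact Or.inr ⟨w, hw⟩
  · have hv : v = w * v * s := by
      calc v = w * u := hw
        _ = w * (v * s) := by rw [← hs]
        _ = w * v * s := by rw [mul_assoc]
    obtain ⟨n, hn⟩ := exists_idem_pw s
    have h3 : v = v * pw s n := eat_right hv hn
    cases n with
    | zero => exact Or.inl (by rw [hs]; exact h3)
    | succ m =>
      refine Or.inr ⟨pw s m, ?_⟩
      rw [hs, mul_assoc]
      have h4 : v = v * (s * pw s m) := by rw [← pw_succ']; exact h3
      exact h4
  · have hv : v = w * v * (s * w') := by
      calc v = w * u * w' := hww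
        _ = w * (v * s) * w' := by rw [← hs]
        _ = w * v * (s * w') := by simp [mul_assoc]
    obtain ⟨n, hn⟩ := exists_idem_pw (s * w')
    have h3 : v = v * pw (s * w') n := eat_right hv hn
    cases n with
    | zero =>
      refine Or.inr ⟨w', ?_⟩
      rw [hs, mul_assoc]
      exact h3
    | succ m =>
      refine Or.inr ⟨w' * pw (s*w') m, ?_⟩
      rw [hs]
      have h4 : v = v * ((s * w') * pw (s*w') m) := by rw [← pw_succ']; exact h3
      calc v = v * ((s * w') * pw (s*w') m) := h4
        _ = v * s * (w' * pw (s*w') m) := by simp [mul_assoc]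

/-- Stability, L version. -/
lemma stabL [Finite S] {u v : S} (h1 : ldvd u v) (h2 : jdvd v u) : ldvd v u := by
  rcases h1 with rfl | ⟨s, hs⟩
  · exact ldvd_refl _
  rcases h2 with rfl | ⟨w, hw⟩ | ⟨w, hw⟩ | ⟨w, w', hww⟩
  · exact Or.inl rfl
  · have hv : v = s * v * w := by
      calc v = u * w := hw
        _ = (s * v) * w := by rw [← hs]
    obtain ⟨n, hn⟩ := exists_idem_pw s
    have h3 : v = pw s n * v := eat_left hv hn
    cases n with
    | zero => exact Or.inl (by rw [hs]; exact h3)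
    | succ m =>
      refine Or.inr ⟨pw s m, ?_⟩
      rw [hs, ← mul_assoc]
      have h4 : v = (pw s m * s) * v := by rw [← pw_succ]; exact h3
      exact h4
  · exact Or.inr ⟨w, hw⟩
  · have hv : v = (w * s) * v * w' := by
      calc v = w * u * w' := hww
        _ = w * (s * v) * w' := by rw [← hs]
        _ = (w * s) * v * w' := by simp [mul_assoc]
    obtain ⟨n, hn⟩ := exists_idem_pw (w * s)
    have h3 : v = pw (w * s) n * v := eat_left hv hn
    cases n with
    | zero =>
      refine Or.inr ⟨w, ?_⟩
      rw [hs, ← mul_assoc]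
      exact h3
    | succ m =>
      refine Or.inr ⟨pw (w*s) m * w, ?_⟩
      rw [hs]
      have h4 : v = (pw (w*s) m * (w * s)) * v := by rw [← pw_succ]; exact h3
      calc v = (pw (w*s) m * (w * s)) * v := h4
        _ = pw (w*s) m * w * (s * v) := by simp [mul_assoc]

end
section
variable {S : Type u} [Semigroup S]

lemma idem_dvd2 {e x : S} (he : e * e = e) (h : jdvd e x) : dvd2 e x := by
  rcases h with rfl | ⟨s, hs⟩ | ⟨s, hs⟩ | ⟨s, t, hst⟩
  · exact ⟨e, e, by rw [he, he]⟩
  · refine ⟨e, s * e, ?_⟩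
    calc e = e * e * e := by rw [he, he]
      _ = e * (x * s) * e := by rw [← hs]
      _ = e * x * (s * e) := by simp [mul_assoc]
  · refine ⟨e * s, e, ?_⟩
    calc e = e * e * e := by rw [he, he]
      _ = e * (s * x) * e := by rw [← hs]
      _ = e * s * x * e := by simp [mul_assoc]
  · refine ⟨e * s, t * e, ?_⟩
    calc e = e * e * e := by rw [he, he]
      _ = e * (s * x * t) * e := by rw [← hst]
      _ = e * s * x * (t * e) := by simp [mul_assoc]

/-- If g ≤ f in the natural order on idempotents and f ≼_J g, then f = g. -/
lemma natural_order_eq [Finite S] {g f : S} (hg : g * g = g) (hf : f * f = f)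
    (hgf : g * f = g) (hfg : f * g = g) (h : dvd2 f g) : f = g := by
  obtain ⟨p, q, hpq⟩ := h
  have hgfg : g * f * g = g := by rw [hgf, hg]
  have hval : f = (p * g) * f * (g * q) := by
    calc f = p * g * q := hpq
      _ = p * (g * f * g) * q := by rw [hgfg]
      _ = (p * g) * f * (g * q) := by simp [mul_assoc]
  obtain ⟨n, hn⟩ := exists_idem_pw (p * g)
  have h2 : f = pw (p * g) n * f := eat_left hval hn
  obtain ⟨c, hc⟩ : ∃ c, pw (p * g) n = c * g := by
    cases n with
    | zero => exact ⟨p, rfl⟩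
    | succ m => exact ⟨pw (p*g) m * p, by rw [pw_succ]; simp [mul_assoc]⟩
  have h3 : f = c * g := by
    calc f = pw (p * g) n * f := h2
      _ = c * g * f := by rw [hc]
      _ = c * (g * f) := by rw [mul_assoc]
      _ = c * g := by rw [hgf]
  have h4 : f * g = f := by rw [h3, mul_assoc, hg]
  rw [← h4, hfg]

lemma RR_symm {a b : S} (h : RR a b) : RR b a := ⟨h.2, h.1⟩
lemma LL_symm {a b : S} (h : LL a b) : LL b a := ⟨h.2, h.1⟩
lemma RR_trans {a b c : S} (h1 : RR a b) (h2 : RR b c) : RR a c :=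
  ⟨rdvd_trans h1.1 h2.1, rdvd_trans h2.2 h1.2⟩
lemma LL_trans {a b c : S} (h1 : LL a b) (h2 : LL b c) : LL a c :=
  ⟨ldvd_trans h1.1 h2.1, ldvd_trans h2.2 h1.2⟩
lemma RR_refl (a : S) : RR a a := ⟨rdvd_refl a, rdvd_refl a⟩
lemma LL_refl (a : S) : LL a a := ⟨ldvd_refl a, ldvd_refl a⟩

/-- distinct commuting idempotents are not R-equivalent -/
lemma not_RR_of_comm_idem {e f : S} (he : e * e = e) (hf : f * f = f)
    (hcomm : e * f = f * e) (hne : e ≠ f) : ¬ RR e f := by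
  rintro ⟨h1, h2⟩
  -- h1 : rdvd e f (e ∈ fS¹) so f * e = e;  h2 : rdvd f e so e * f = f
  have hfe : f * e = e := by
    rcases h1 with rfl | ⟨s, rfl⟩
    · exact hf
    · rw [← mul_assoc, hf]
  have hef : e * f = f := by
    rcases h2 with rfl | ⟨s, rfl⟩
    · exact he
    · rw [← mul_assoc, he]
  exact hne (by rw [← hfe, ← hcomm, hef])

lemma not_LL_of_comm_idem {e f : S} (he : e * e = e) (hf : f * f = f)
    (hcomm : e * f = f * e) (hne : e ≠ f) : ¬ LL e f := by
  rintro ⟨h1, h2⟩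
  have hef : e * f = e := by
    rcases h1 with rfl | ⟨s, rfl⟩
    · exact hf
    · rw [mul_assoc, hf]
  have hfe : f * e = f := by
    rcases h2 with rfl | ⟨s, rfl⟩
    · exact he
    · rw [mul_assoc, he]
  exact hne (by rw [← hef, hcomm, hfe])

end
section
variable {S : Type u} [Semigroup S]

/-- c is in the J-class of the idempotent e -/
def JclsOf (e c : S) : Prop := jdvd c e ∧ dvd2 e c

/-- Cell lemma: in the J-class of e, for any c1 c2 there is x with x R c1 and x L c2. -/
lemma cell [Finite S] {e c1 c2 : S} (h1 : JclsOf e c1) (h2 : JclsOf e c2) :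
    ∃ x, RR x c1 ∧ LL x c2 ∧ JclsOf e x := by
  have hc2c1 : jdvd c2 c1 := jdvd_trans h2.1 h1.2.jdvd
  have hc1c2 : jdvd c1 c2 := jdvd_trans h1.1 h2.2.jdvd
  rcases hc2c1 with heq | ⟨s, hs⟩ | ⟨s, hs⟩ | ⟨s, t, hst⟩
  · exact ⟨c1, RR_refl c1, heq ▸ LL_refl c1, h1⟩
  · refine ⟨c2, ⟨Or.inr ⟨s, hs⟩, stabR (Or.inr ⟨s, hs⟩) hc1c2⟩, LL_refl c2, h2⟩
  · refine ⟨c1, RR_refl c1, ⟨stabL (Or.inr ⟨s, hs⟩) hc1c2, Or.inr ⟨s, hs⟩⟩, h1⟩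
  · have h2' : jdvd c2 (c1 * t) := Or.inr (Or.inr (Or.inl ⟨s, by rw [hst, mul_assoc]⟩))
    have hx1 : jdvd (c1 * t) c1 := Or.inr (Or.inl ⟨t, rfl⟩)
    have hRx : RR (c1 * t) c1 := by
      refine ⟨Or.inr ⟨t, rfl⟩, stabR (Or.inr ⟨t, rfl⟩) ?_⟩
      exact jdvd_trans hc1c2 h2'
    have hLx : LL (c1 * t) c2 := by
      have hl : ldvd c2 (c1 * t) := Or.inr ⟨s, by rw [hst, mul_assoc]⟩
      refine ⟨stabL hl ?_, hl⟩
      exact jdvd_trans (jdvd_trans hx1 h1.1) h2.2.jdvd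
    refine ⟨c1 * t, hRx, hLx, jdvd_trans hx1 h1.1, ?_⟩
    obtain ⟨p, q, hpq⟩ := h2.2
    exact ⟨p * s, q, by rw [hpq, hst]; simp [mul_assoc]⟩

end
section
variable {S : Type u} [Semigroup S]

/-- a filter: x*y ∈ F iff x ∈ F and y ∈ F -/
def IsFilt (F : Set S) : Prop := ∀ x y : S, x * y ∈ F ↔ (x ∈ F ∧ y ∈ F)

/-- set-level indecomposability -/
def IndecS (S : Type u) [Semigroup S] : Prop :=
  ∀ F : Set S, IsFilt F → F = ∅ ∨ F = Set.univ

lemma indecS_of (hS : SemilatticeIndecomposable S) : IndecS S := by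
  intro F hF
  classical
  rcases Set.eq_empty_or_nonempty F with h | ⟨a, ha⟩
  · exact Or.inl h
  · right
    letI : Mul (ULift.{u} Bool) := ⟨fun a b => ⟨a.down && b.down⟩⟩
    letI : Semigroup (ULift.{u} Bool) :=
      { mul_assoc := by
          intro a b c
          exact congrArg ULift.up (Bool.and_assoc _ _ _) }
    have hcomm : ∀ a b : ULift.{u} Bool, a * b = b * a := by
      intro a b; exact congrArg ULift.up (Bool.and_comm _ _)
    have hidem : ∀ a : ULift.{u} Bool, a * a = a := by
      intro a; exact congrArg ULift.up (Bool.and_self _)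
    let f : S →ₙ* ULift.{u} Bool :=
      { toFun := fun x => ⟨decide (x ∈ F)⟩
        map_mul' := by
          intro x y
          refine congrArg ULift.up ?_
          rw [show (decide (x * y ∈ F)) = decide (x ∈ F ∧ y ∈ F) from
            decide_eq_decide.mpr (hF x y)]
          exact Bool.decide_and _ _ }
    have hconst := hS (ULift.{u} Bool) hcomm hidem f
    ext y
    simp only [Set.mem_univ, iff_true]
    have h1 : f y = f a := hconst y a
    have h2 : (⟨decide (y ∈ F)⟩ : ULift Bool) = ⟨decide (a ∈ F)⟩ := h1
    have h3 : decide (y ∈ F) = decide (a ∈ F) := congrArg ULift.down h2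
    have h4 : decide (a ∈ F) = true := decide_eq_true ha
    rw [h4] at h3
    exact of_decide_eq_true h3

end
section
variable {S : Type u} [Semigroup S]

/-- the complement-of-J-upset ideal P(e) -/
def Pdn (e : S) : Set S := {w | jdvd w e ∧ ¬ dvd2 e w}

lemma Pdn_mul_left {e w : S} (s : S) (h : w ∈ Pdn e) : s * w ∈ Pdn e := by
  refine ⟨jdvd_mul_left s h.1, ?_⟩
  rintro ⟨A, B, hAB⟩
  exact h.2 ⟨A * s, B, by rw [hAB]; simp [mul_assoc]⟩

lemma Pdn_mul_right {e w : S} (s : S) (h : w ∈ Pdn e) : w * s ∈ Pdn e := by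
  refine ⟨jdvd_mul_right s h.1, ?_⟩
  rintro ⟨A, B, hAB⟩
  exact h.2 ⟨A, s * B, by rw [hAB]; simp [mul_assoc]⟩

lemma e_not_Pdn {e : S} (he : e * e = e) : e ∉ Pdn e := by
  rintro ⟨-, h2⟩
  exact h2 ⟨e, e, by rw [he, he]⟩

lemma JclsOf_e {e : S} (he : e * e = e) : JclsOf e e :=
  ⟨jdvd_refl e, ⟨e, e, by rw [he, he]⟩⟩

/-- Key dichotomy: from indecomposability, the J-class of a nonzero idempotent e contains
u, v with u*v in the ideal strictly below e. -/
lemma exists_uv (hind : IndecS S) {z : S} (hz : ∀ x, z * x = z ∧ x * z = z)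
    {e : S} (he : e * e = e) (hez : e ≠ z) :
    ∃ u v, JclsOf e u ∧ JclsOf e v ∧ u * v ∈ Pdn e := by
  by_cases hclosed : ∀ x y : S, dvd2 e x → dvd2 e y → dvd2 e (x * y)
  · exfalso
    have hfilt : IsFilt {x | dvd2 e x} := by
      intro x y
      constructor
      · rintro ⟨p, q, hpq⟩
        exact ⟨⟨p, y * q, by rw [hpq]; simp [mul_assoc]⟩, ⟨p * x, q, by rw [hpq]; simp [mul_assoc]⟩⟩
      · rintro ⟨h1, h2⟩
        exact hclosed x y h1 h2
    rcases hind _ hfilt with hemp | huniv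
    · have : e ∈ ({x | dvd2 e x} : Set S) := (JclsOf_e he).2
      rw [hemp] at this
      exact this
    · have : z ∈ ({x | dvd2 e x} : Set S) := by rw [huniv]; trivial
      obtain ⟨p, q, hpq⟩ := this
      exact hez (by rw [hpq, (hz p).2, (hz q).1])
  · push_neg at hclosed
    obtain ⟨x, y, hx, hy, hxy⟩ := hclosed
    obtain ⟨p, q, hpq⟩ := hx
    obtain ⟨p', q', hpq'⟩ := hy
    refine ⟨e * p * x, y * q' * e, ⟨?_, ?_⟩, ⟨?_, ?_⟩, ?_, ?_⟩
    · exact Or.inr (Or.inl ⟨p * x, by simp [mul_assoc]⟩)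
    · refine ⟨e, q * e, ?_⟩
      have h2 : e * (e * p * x) * (q * e) = (e * e) * (p * x * q) * e := by simp [mul_assoc]
      calc e = e * e * e := by rw [he, he]
        _ = e * (p * x * q) * e := by rw [← hpq]
        _ = (e * e) * (p * x * q) * e := by rw [he]
        _ = e * (e * p * x) * (q * e) := h2.symm
    · exact Or.inr (Or.inr (Or.inl ⟨y * q', by simp [mul_assoc]⟩))
    · refine ⟨e * p', e, ?_⟩
      have h2 : (e * p') * (y * q' * e) * e = e * (p' * y * q') * (e * e) := by simp [mul_assoc]
      calc e = e * e * e := by rw [he, he]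
        _ = e * (p' * y * q') * e := by rw [← hpq']
        _ = e * (p' * y * q') * (e * e) := by rw [he]
        _ = (e * p') * (y * q' * e) * e := h2.symm
    · exact Or.inr (Or.inr (Or.inl ⟨e * p * x * y * q', by simp [mul_assoc]⟩))
    · rintro ⟨A, B, hAB⟩
      refine hxy ⟨A * e * p, q' * e * B, ?_⟩
      calc e = A * (e * p * x * (y * q' * e)) * B := hAB
        _ = A * e * p * (x * y) * (q' * e * B) := by simp [mul_assoc]
end
section
variable {S : Type u} [Semigroup S] [Finite S]

lemma exists_nonRR (hind : IndecS S) {z : S} (hz : ∀ x, z * x = z ∧ x * z = z)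
    {e : S} (he : e * e = e) (hez : e ≠ z) :
    ∃ c1 c2, JclsOf e c1 ∧ JclsOf e c2 ∧ ¬ RR c1 c2 := by
  obtain ⟨u, v, hu, hv, hP⟩ := exists_uv hind hz he hez
  by_contra hcon
  push_neg at hcon
  have hall : ∀ c1 c2, JclsOf e c1 → JclsOf e c2 → RR c1 c2 := by
    intro c1 c2 h1 h2
    by_contra hnR
    exact hnR (hcon c1 c2 h1 h2)
  have hRv : RR v e := hall v e hv (JclsOf_e he)
  have hue : u * e ∈ Pdn e := by
    rcases hRv.2 with heqv | ⟨w, hw⟩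
    · have h1 : u * e = u * v := by rw [heqv]
      rw [h1]; exact hP
    · have h1 : u * e = (u * v) * w := by rw [hw, ← mul_assoc]
      rw [h1]; exact Pdn_mul_right w hP
  have hRu : RR u e := hall u e hu (JclsOf_e he)
  rcases hRu.2 with hequ | ⟨s, hs⟩
  · apply e_not_Pdn he
    have h1 := hue
    rw [← hequ, he] at h1
    exact h1
  · have heu : e * u = u := by
      rcases hRu.1 with h | ⟨t, ht⟩
      · rw [h]; exact he
      · rw [ht, ← mul_assoc, he]
    have base : u = u * (s * u) := by
      calc u = e * u := heu.symm
        _ = (u * s) * u := by rw [hs]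
        _ = u * (s * u) := mul_assoc u s u
    have hiter : ∀ n, u = u * pw (s*u) n := by
      intro n
      induction n with
      | zero => exact base
      | succ m ih =>
        calc u = u * (s*u) := base
          _ = (u * pw (s*u) m) * (s*u) := by rw [← ih]
          _ = u * pw (s*u) (m+1) := by rw [pw_succ, mul_assoc]
    obtain ⟨N, hN⟩ := exists_idem_pw (s*u)
    set h := pw (s*u) N with hh
    have hju : jdvd h u := by
      cases N with
      | zero => exact Or.inr (Or.inr (Or.inl ⟨s, rfl⟩))
      | succ m =>
        exact Or.inr (Or.inr (Or.inl ⟨pw (s*u) m * s, by rw [hh, pw_succ]; simp [mul_assoc]⟩))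
    have hjhe : jdvd h e := jdvd_trans hju hu.1
    have hhe : h * e ∈ Pdn e := by
      cases N with
      | zero =>
        have : h * e = s * (u * e) := by rw [hh]; exact mul_assoc s u e
        rw [this]
        exact Pdn_mul_left s hue
      | succ m =>
        have : h * e = pw (s*u) m * (s * (u * e)) := by rw [hh, pw_succ]; simp [mul_assoc]
        rw [this]
        exact Pdn_mul_left _ (Pdn_mul_left s hue)
    by_cases hd2 : dvd2 e h
    · have hRh : RR h e := hall h e ⟨hjhe, hd2⟩ (JclsOf_e he)
      rcases hRh.2 with heqh | ⟨s2, hs2⟩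
      · apply e_not_Pdn he
        have h1 := hhe
        rw [← heqh, he] at h1
        exact h1
      · have h5 : h * e = e := by rw [hs2, ← mul_assoc, hN]
        have h8 := hhe
        rw [h5] at h8
        exact e_not_Pdn he h8
    · have hhP : h ∈ Pdn e := ⟨hjhe, hd2⟩
      have h6 : u * h ∈ Pdn e := Pdn_mul_left u hhP
      have h7 : u = u * h := by rw [hh]; exact hiter N
      rw [← h7] at h6
      exact h6.2 hu.2

lemma exists_nonLL (hind : IndecS S) {z : S} (hz : ∀ x, z * x = z ∧ x * z = z)
    {e : S} (he : e * e = e) (hez : e ≠ z) :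
    ∃ c1 c2, JclsOf e c1 ∧ JclsOf e c2 ∧ ¬ LL c1 c2 := by
  obtain ⟨u, v, hu, hv, hP⟩ := exists_uv hind hz he hez
  by_contra hcon
  push_neg at hcon
  have hall : ∀ c1 c2, JclsOf e c1 → JclsOf e c2 → LL c1 c2 := by
    intro c1 c2 h1 h2
    by_contra hnL
    exact hnL (hcon c1 c2 h1 h2)
  have hLu : LL u e := hall u e hu (JclsOf_e he)
  have hev : e * v ∈ Pdn e := by
    rcases hLu.2 with hequ | ⟨w, hw⟩
    · have h1 : e * v = u * v := by rw [hequ]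
      rw [h1]; exact hP
    · have h1 : e * v = w * (u * v) := by rw [hw, mul_assoc]
      rw [h1]; exact Pdn_mul_left w hP
  have hLv : LL v e := hall v e hv (JclsOf_e he)
  rcases hLv.2 with heqv | ⟨s, hs⟩
  · apply e_not_Pdn he
    have h1 := hev
    rw [← heqv, he] at h1
    exact h1
  · have hve : v * e = v := by
      rcases hLv.1 with h | ⟨t, ht⟩
      · rw [h]; exact he
      · rw [ht, mul_assoc, he]
    have base : v = (v * s) * v := by
      calc v = v * e := hve.symm
        _ = v * (s * v) := by rw [hs]
        _ = (v * s) * v := (mul_assoc v s v).symm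
    have hiter : ∀ n, v = pw (v*s) n * v := by
      intro n
      induction n with
      | zero => exact base
      | succ m ih =>
        calc v = (v*s) * v := base
          _ = (v*s) * (pw (v*s) m * v) := by rw [← ih]
          _ = v * s * pw (v*s) m * v := by simp [mul_assoc]
          _ = pw (v*s) (m+1) * v := by rw [pw_succ']
    obtain ⟨N, hN⟩ := exists_idem_pw (v*s)
    set h := pw (v*s) N with hh
    have hjv : jdvd h v := by
      cases N with
      | zero => exact Or.inr (Or.inl ⟨s, rfl⟩)
      | succ m =>
        exact Or.inr (Or.inl ⟨s * pw (v*s) m, by rw [hh, pw_succ']; simp [mul_assoc]⟩)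
    have hjhe : jdvd h e := jdvd_trans hjv hv.1
    have heh : e * h ∈ Pdn e := by
      cases N with
      | zero =>
        have : e * h = (e * v) * s := by rw [hh]; exact (mul_assoc e v s).symm
        rw [this]
        exact Pdn_mul_right s hev
      | succ m =>
        have : e * h = ((e * v) * s) * pw (v*s) m := by rw [hh, pw_succ']; simp [mul_assoc]
        rw [this]
        exact Pdn_mul_right _ (Pdn_mul_right s hev)
    by_cases hd2 : dvd2 e h
    · have hLh : LL h e := hall h e ⟨hjhe, hd2⟩ (JclsOf_e he)
      rcases hLh.2 with heqh | ⟨s2, hs2⟩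
      · apply e_not_Pdn he
        have h1 := heh
        rw [← heqh, he] at h1
        exact h1
      · have h5 : e * h = e := by rw [hs2, mul_assoc, hN]
        have h8 := heh
        rw [h5] at h8
        exact e_not_Pdn he h8
    · have hhP : h ∈ Pdn e := ⟨hjhe, hd2⟩
      have h6 : h * v ∈ Pdn e := Pdn_mul_right v hhP
      have h7 : v = h * v := by rw [hh]; exact hiter N
      rw [← h7] at h6
      exact h6.2 hv.2

end
section
variable {S : Type u} [Semigroup S] [Finite S]

lemma class_four (hind : IndecS S) {z : S} (hz : ∀ x, z * x = z ∧ x * z = z)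
    {e : S} (he : e * e = e) (hez : e ≠ z) :
    ∃ x11 x12 x21 x22 : S, JclsOf e x11 ∧ JclsOf e x12 ∧ JclsOf e x21 ∧ JclsOf e x22 ∧
      x11 ≠ x12 ∧ x11 ≠ x21 ∧ x11 ≠ x22 ∧ x12 ≠ x21 ∧ x12 ≠ x22 ∧ x21 ≠ x22 := by
  obtain ⟨c1, c2, hc1, hc2, hnR⟩ := exists_nonRR hind hz he hez
  obtain ⟨d1, d2, hd1, hd2, hnL⟩ := exists_nonLL hind hz he hez
  obtain ⟨x11, hR11, hL11, hcls11⟩ := cell hc1 hd1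
  obtain ⟨x12, hR12, hL12, hcls12⟩ := cell hc1 hd2
  obtain ⟨x21, hR21, hL21, hcls21⟩ := cell hc2 hd1
  obtain ⟨x22, hR22, hL22, hcls22⟩ := cell hc2 hd2
  refine ⟨x11, x12, x21, x22, hcls11, hcls12, hcls21, hcls22, ?_, ?_, ?_, ?_, ?_, ?_⟩
  · rintro rfl; exact hnL (LL_trans (LL_symm hL11) hL12)
  · rintro rfl; exact hnR (RR_trans (RR_symm hR11) hR21)
  · rintro rfl; exact hnR (RR_trans (RR_symm hR11) hR22)
  · rintro rfl; exact hnR (RR_trans (RR_symm hR12) hR21)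
  · rintro rfl; exact hnR (RR_trans (RR_symm hR12) hR22)
  · rintro rfl; exact hnL (LL_trans (LL_symm hL21) hL22)

lemma ncard_four {a b c d : S} (hab : a ≠ b) (hac : a ≠ c) (had : a ≠ d)
    (hbc : b ≠ c) (hbd : b ≠ d) (hcd : c ≠ d) : ({a, b, c, d} : Set S).ncard = 4 := by
  rw [Set.ncard_insert_of_notMem (by simp [hab, hac, had]) (Set.toFinite _),
      Set.ncard_insert_of_notMem (by simp [hbc, hbd]) (Set.toFinite _),
      Set.ncard_insert_of_notMem (by simp [hcd]) (Set.toFinite _),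
      Set.ncard_singleton]

lemma class_ncard_four (hind : IndecS S) {z : S} (hz : ∀ x, z * x = z ∧ x * z = z)
    {e : S} (he : e * e = e) (hez : e ≠ z) :
    4 ≤ {c | JclsOf e c}.ncard := by
  obtain ⟨a, b, c, d, h1, h2, h3, h4, hab, hac, had, hbc, hbd, hcd⟩ := class_four hind hz he hez
  have hsub : ({a, b, c, d} : Set S) ⊆ {c | JclsOf e c} := by
    rintro x (rfl | rfl | rfl | rfl) <;> assumption
  calc (4:ℕ) = ({a, b, c, d} : Set S).ncard := (ncard_four hab hac had hbc hbd hcd).symm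
    _ ≤ _ := Set.ncard_le_ncard hsub (Set.toFinite _)

lemma grid {e : S} (T : Set S) (hT : ∀ a ∈ T, JclsOf e a) (hidem : ∀ a ∈ T, a * a = a)
    (hcomm : ∀ a ∈ T, ∀ b ∈ T, a * b = b * a) :
    T.ncard * T.ncard ≤ {c | JclsOf e c}.ncard := by
  classical
  have hcell : ∀ (a b : ↑T), ∃ x : S, RR x ↑a ∧ LL x ↑b ∧ JclsOf e x :=
    fun a b => cell (hT _ a.2) (hT _ b.2)
  choose f hf1 hf2 hf3 using hcell
  let F : ↑T × ↑T → ({c | JclsOf e c} : Set S) := fun p => ⟨f p.1 p.2, hf3 p.1 p.2⟩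
  have hinj : Function.Injective F := by
    rintro ⟨a, b⟩ ⟨a', b'⟩ h
    have hx : f a b = f a' b' := congrArg Subtype.val h
    have hRa : RR (a : S) (a' : S) := RR_trans (hx ▸ RR_symm (hf1 a b)) (hf1 a' b')
    have hLb : LL (b : S) (b' : S) := LL_trans (hx ▸ LL_symm (hf2 a b)) (hf2 a' b')
    have hab : (a : S) = a' := by
      by_contra hne
      exact not_RR_of_comm_idem (hidem _ a.2) (hidem _ a'.2) (hcomm _ a.2 _ a'.2) hne hRa
    have hbb : (b : S) = b' := by
      by_contra hne
      exact not_LL_of_comm_idem (hidem _ b.2) (hidem _ b'.2) (hcomm _ b.2 _ b'.2) hne hLb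
    exact Prod.ext (Subtype.ext hab) (Subtype.ext hbb)
  calc T.ncard * T.ncard = Nat.card (↑T × ↑T) := by
        rw [Nat.card_prod, Nat.card_coe_set_eq]
    _ ≤ Nat.card ({c | JclsOf e c} : Set S) := Nat.card_le_card_of_injective F hinj
    _ = _ := Nat.card_coe_set_eq _

end
section
variable {S : Type u} [Semigroup S]

def IsIdeal (I : Set S) : Prop := ∀ x ∈ I, ∀ s : S, s * x ∈ I ∧ x * s ∈ I

def reesSetoid (I : Set S) : Setoid S where
  r x y := x = y ∨ (x ∈ I ∧ y ∈ I)
  iseqv := by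
    refine ⟨fun x => Or.inl rfl, ?_, ?_⟩
    · rintro x y (rfl | ⟨h1, h2⟩)
      · exact Or.inl rfl
      · exact Or.inr ⟨h2, h1⟩
    · rintro x y z (rfl | ⟨h1, h2⟩) (rfl | ⟨h3, h4⟩)
      · exact Or.inl rfl
      · exact Or.inr ⟨h3, h4⟩
      · exact Or.inr ⟨h1, h2⟩
      · exact Or.inr ⟨h1, h4⟩

lemma rees_pack [Fintype S] (I : Set S) (hI : IsIdeal I) (hne : I.Nonempty) :
    ∃ (T : Type u) (_s : Semigroup T) (_f : Fintype T) (π : S → T),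
      (∀ x y, π (x * y) = π x * π y) ∧ Function.Surjective π ∧
      (∀ x y, π x = π y ↔ (x = y ∨ (x ∈ I ∧ y ∈ I))) ∧
      Fintype.card T + I.ncard = Fintype.card S + 1 := by
  classical
  obtain ⟨z0, hz0⟩ := hne
  let sd := reesSetoid I
  letI : DecidableRel sd.r := fun a b => Classical.propDecidable _
  let T := Quotient sd
  have hmulwd : ∀ (a a' : S), sd.r a a' → ∀ (b b' : S), sd.r b b' → sd.r (a * b) (a' * b') := by
    rintro a a' (rfl | ⟨h1, h2⟩) b b' (rfl | ⟨h3, h4⟩)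
    · exact Or.inl rfl
    · exact Or.inr ⟨(hI b h3 a).1, (hI b' h4 a).1⟩
    · exact Or.inr ⟨(hI a h1 b).2, (hI a' h2 b).2⟩
    · exact Or.inr ⟨(hI a h1 b).2, (hI a' h2 b').2⟩
  letI : Mul T := ⟨Quotient.map₂ (· * ·) hmulwd⟩
  have hmk : ∀ x y : S, (⟦x⟧ : T) * ⟦y⟧ = ⟦x * y⟧ := fun x y => rfl
  letI : Semigroup T :=
    { mul_assoc := by
        rintro ⟨a⟩ ⟨b⟩ ⟨c⟩
        show (⟦a⟧ * ⟦b⟧ * ⟦c⟧ : T) = ⟦a⟧ * (⟦b⟧ * ⟦c⟧)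
        rw [hmk, hmk, hmk, hmk, mul_assoc] }
  letI : Fintype T := Quotient.fintype sd
  refine ⟨T, inferInstance, inferInstance, Quotient.mk sd, fun x y => (hmk x y).symm, ?_, ?_, ?_⟩
  · exact fun q => Quotient.inductionOn q (fun x => ⟨x, rfl⟩)
  · intro x y
    constructor
    · intro h
      exact Quotient.exact h
    · intro h
      exact Quotient.sound h
  · have hwd : ∀ (a b : S), sd.r a b →
        (if h : a ∈ I then (none : Option {x : S // x ∉ I}) else some ⟨a, h⟩) =
        (if h : b ∈ I then none else some ⟨b, h⟩) := by
      rintro a b (rfl | ⟨h1, h2⟩)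
      · rfl
      · simp [h1, h2]
    let eqv : T ≃ Option {x : S // x ∉ I} :=
      { toFun := Quotient.lift _ hwd
        invFun := fun o => o.elim ⟦z0⟧ (fun x => ⟦x.1⟧)
        left_inv := by
          rintro ⟨x⟩
          show Option.elim
            (if h : x ∈ I then (none : Option {x : S // x ∉ I}) else some ⟨x, h⟩)
            (⟦z0⟧ : T) (fun y => ⟦y.1⟧) = ⟦x⟧
          by_cases hx : x ∈ I
          · simp only [hx, dif_pos, Option.elim]
            exact Quotient.sound (Or.inr ⟨hz0, hx⟩)
          · simp only [hx, dif_neg, not_false_iff, Option.elim]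
        right_inv := by
          rintro (_ | ⟨x, hx⟩)
          · show (if h : z0 ∈ I then (none : Option {x : S // x ∉ I}) else some ⟨z0, h⟩) = none
            simp [hz0]
          · show (if h : x ∈ I then (none : Option {x : S // x ∉ I}) else some ⟨x, h⟩) = some ⟨x, hx⟩
            simp [hx] }
    have h1 : Fintype.card T = Fintype.card {x : S // x ∉ I} + 1 := by
      rw [Fintype.card_congr eqv, Fintype.card_option]
    have h2 : I.ncard = Fintype.card {x : S // x ∈ I} := by
      rw [Set.ncard_eq_toFinset_card', Set.toFinset_card]
    have h3 : Fintype.card {x : S // x ∈ I} + Fintype.card {x : S // ¬ x ∈ I} = Fintype.card S := by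
      rw [← Fintype.card_sum]
      exact Fintype.card_congr (Equiv.sumCompl _)
    omega
end
section
variable {S : Type u} [Semigroup S]

lemma transfer_indec {T : Type u} [Semigroup T] (I : Set S) (hI : IsIdeal I) (hne : I.Nonempty)
    (π : S → T) (hhom : ∀ x y, π (x * y) = π x * π y) (hsurj : Function.Surjective π)
    (heqv : ∀ x y, π x = π y ↔ (x = y ∨ (x ∈ I ∧ y ∈ I))) (hind : IndecS S) : IndecS T := by
  intro G hG
  obtain ⟨z0, hz0⟩ := hne
  by_cases hzG : π z0 ∈ G
  · right
    ext t
    simp only [Set.mem_univ, iff_true]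
    obtain ⟨x, rfl⟩ := hsurj t
    have h1 : π x * π z0 = π z0 := by
      rw [← hhom]
      exact (heqv _ _).mpr (Or.inr ⟨(hI z0 hz0 x).1, hz0⟩)
    have h2 : π x * π z0 ∈ G := by rw [h1]; exact hzG
    exact ((hG _ _).mp h2).1
  · left
    by_contra hGne
    obtain ⟨t, ht⟩ := Set.nonempty_iff_ne_empty.mpr hGne
    have hfilt : IsFilt (π ⁻¹' G) := by
      intro x y
      show π (x * y) ∈ G ↔ _
      rw [hhom]
      exact hG (π x) (π y)
    rcases hind _ hfilt with hemp | huniv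
    · obtain ⟨x, rfl⟩ := hsurj t
      have : x ∈ π ⁻¹' G := ht
      rw [hemp] at this
      exact this
    · have : z0 ∈ π ⁻¹' G := by rw [huniv]; trivial
      exact hzG this

end
theorem core : ∀ (n : ℕ), ∀ (S : Type u) (_i1 : Semigroup S) (_i2 : Fintype S),
    Fintype.card S ≤ n →
    IndecS S → ∀ (z : S), (∀ x, z * x = z ∧ x * z = z) →
    ∀ Y : Set S, (∀ a ∈ Y, ∀ b ∈ Y, a * b ∈ Y) → (∀ a ∈ Y, a * a = a) →
      (∀ a ∈ Y, ∀ b ∈ Y, a * b = b * a) →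
    z ∈ Y → 4 * (Y.ncard / 2) + 1 ≤ Fintype.card S := by
  intro n
  induction n with
  | zero =>
    intro S _ _ hcard _ z _ _ _ _ _ _
    exact absurd (Fintype.card_pos_iff.mpr ⟨z⟩) (by omega)
  | succ n IH =>
    intro S _ _ hcard hind z hz Y hclos hidem hcomm hzY
    classical
    by_cases hY1 : Y.ncard ≤ 1
    · have hpos : 0 < Fintype.card S := Fintype.card_pos_iff.mpr ⟨z⟩
      have : Y.ncard / 2 = 0 := by omega
      omega
    push_neg at hY1
    have hYfin : Y.Finite := Set.toFinite Y
    -- find a J-minimal element e of Y \ {z}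
    have hY'ne : (Y \ {z}).Nonempty := by
      obtain ⟨a, ha, b, hb, hab⟩ := (Set.one_lt_ncard hYfin).mp hY1
      by_cases haz : a = z
      · exact ⟨b, hb, by simp [← haz, Ne.symm hab]⟩
      · exact ⟨a, ha, by simp [haz]⟩
    obtain ⟨e, heY', hmin⟩ := Set.exists_min_image (Y \ {z})
      (fun x => {f ∈ Y \ {z} | jdvd f x}.ncard) hYfin.diff hY'ne
    have heY : e ∈ Y := heY'.1
    have hez : e ≠ z := by simpa using heY'.2
    have hee : e * e = e := hidem e heY
    have hminimal : ∀ f ∈ Y \ {z}, jdvd f e → jdvd e f := by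
      intro f hf hfe
      by_contra hnef
      have hsub : {g ∈ Y \ {z} | jdvd g f} ⊆ {g ∈ Y \ {z} | jdvd g e} \ {e} := by
        rintro g ⟨hg, hgf⟩
        refine ⟨⟨hg, jdvd_trans hgf hfe⟩, ?_⟩
        simp only [Set.mem_singleton_iff]
        rintro rfl
        exact hnef hgf
      have h1 : {g ∈ Y \ {z} | jdvd g f}.ncard ≤ ({g ∈ Y \ {z} | jdvd g e} \ {e}).ncard :=
        Set.ncard_le_ncard hsub (Set.toFinite _)
      have h2 : ({g ∈ Y \ {z} | jdvd g e} \ {e}).ncard < {g ∈ Y \ {z} | jdvd g e}.ncard :=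
        Set.ncard_diff_singleton_lt_of_mem ⟨heY', jdvd_refl e⟩ (Set.toFinite _)
      have h3 := hmin f hf
      omega
    -- the ideal and the J-class
    set Dn : Set S := {x | jdvd x e} with hDn
    set Cls : Set S := {c | JclsOf e c} with hCls
    have hIdeal : IsIdeal Dn := fun x hx s => ⟨jdvd_mul_left s hx, jdvd_mul_right s hx⟩
    have hzD : z ∈ Dn := Or.inr (Or.inr (Or.inl ⟨z, ((hz e).1).symm⟩))
    have heD : e ∈ Dn := jdvd_refl e
    have hzCls : z ∉ Cls := by
      rintro ⟨-, p, q, hpq⟩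
      exact hez (by rw [hpq, (hz p).2, (hz q).1])
    have hYD : ∀ y ∈ Y, y ∈ Dn → y = z ∨ y ∈ Cls := by
      intro y hy hyD
      by_cases hyz : y = z
      · exact Or.inl hyz
      · exact Or.inr ⟨hyD, idem_dvd2 hee (hminimal y ⟨hy, hyz⟩ hyD)⟩
    set mC := (Y ∩ Cls).ncard with hmC
    have heYC : e ∈ Y ∩ Cls := ⟨heY, JclsOf_e hee⟩
    have hmC1 : 1 ≤ mC := (Set.ncard_pos (Set.toFinite _)).mpr ⟨e, heYC⟩
    -- the class is large
    have hClsbound : 4 * ((mC + 1) / 2) ≤ Cls.ncard := by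
      rcases eq_or_lt_of_le hmC1 with h1 | h2
      · have h4 := class_ncard_four hind hz hee hez
        rw [← h1]
        simpa using h4
      · have hg := grid (e := e) (Y ∩ Cls) (fun a ha => ha.2) (fun a ha => hidem a ha.1)
          (fun a ha b hb => hcomm a ha.1 b hb.1)
        have hmm : 4 * ((mC + 1) / 2) ≤ mC * mC := by
          rcases Nat.even_or_odd mC with ⟨k, hk⟩ | ⟨k, hk⟩
          · have hk2 : 2 ≤ mC := h2
            have : 2 * mC ≤ mC * mC := Nat.mul_le_mul_right mC hk2
            omega
          · have hk1 : 1 ≤ k := by omega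
            have : mC * mC = 4 * (k * k) + 4 * k + 1 := by rw [hk]; ring
            have hkk : k ≤ k * k := Nat.le_mul_of_pos_left k hk1
            omega
        exact le_trans hmm hg
    -- Y ∩ Dn = insert z (Y ∩ Cls)
    have hYDn : Y ∩ Dn = insert z (Y ∩ Cls) := by
      ext y
      constructor
      · rintro ⟨hy, hyD⟩
        rcases hYD y hy hyD with rfl | hc
        · exact Set.mem_insert _ _
        · exact Set.mem_insert_of_mem _ ⟨hy, hc⟩
      · rintro (rfl | ⟨hy, hc⟩)
        · exact ⟨hzY, hzD⟩
        · exact ⟨hy, hc.1⟩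
    have hYDncard : (Y ∩ Dn).ncard = mC + 1 := by
      rw [hYDn, Set.ncard_insert_of_notMem (fun h => hzCls h.2) (Set.toFinite _)]
    -- quotient
    obtain ⟨T, _iT, _fT, π, hhom, hsurj, heqv, hcardT⟩ := rees_pack Dn hIdeal ⟨z, hzD⟩
    have hindT : IndecS T := transfer_indec Dn hIdeal ⟨z, hzD⟩ π hhom hsurj heqv hind
    have hzT : ∀ t, π z * t = π z ∧ t * π z = π z := by
      intro t
      obtain ⟨x, rfl⟩ := hsurj t
      constructor
      · rw [← hhom, (hz x).1]
      · rw [← hhom, (hz x).2]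
    set Yb := π '' Y with hYb
    have hclosb : ∀ a ∈ Yb, ∀ b ∈ Yb, a * b ∈ Yb := by
      rintro _ ⟨x, hx, rfl⟩ _ ⟨y, hy, rfl⟩
      exact ⟨x * y, hclos x hx y hy, hhom x y⟩
    have hidemb : ∀ a ∈ Yb, a * a = a := by
      rintro _ ⟨x, hx, rfl⟩
      rw [← hhom, hidem x hx]
    have hcommb : ∀ a ∈ Yb, ∀ b ∈ Yb, a * b = b * a := by
      rintro _ ⟨x, hx, rfl⟩ _ ⟨y, hy, rfl⟩
      rw [← hhom, ← hhom, hcomm x hx y hy]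
    have hzYb : π z ∈ Yb := ⟨z, hzY, rfl⟩
    -- card of Yb
    have hYbcard : Yb.ncard + mC = Y.ncard := by
      have himg : Yb = insert (π z) (π '' (Y \ Dn)) := by
        ext t
        constructor
        · rintro ⟨y, hy, rfl⟩
          by_cases hyD : y ∈ Dn
          · left
            exact (heqv y z).mpr (Or.inr ⟨hyD, hzD⟩)
          · right
            exact ⟨y, ⟨hy, hyD⟩, rfl⟩
        · rintro (rfl | ⟨y, ⟨hy, _⟩, rfl⟩)
          · exact ⟨z, hzY, rfl⟩
          · exact ⟨y, hy, rfl⟩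
      have hinj : Set.InjOn π (Y \ Dn) := by
        rintro x ⟨-, hx⟩ y ⟨-, -⟩ hxy
        rcases (heqv x y).mp hxy with h | ⟨h1, -⟩
        · exact h
        · exact absurd h1 hx
      have hnotmem : π z ∉ π '' (Y \ Dn) := by
        rintro ⟨y, ⟨-, hy⟩, hyz⟩
        rcases (heqv y z).mp hyz with rfl | ⟨h1, -⟩
        · exact hy hzD
        · exact hy h1
      have h1 : Yb.ncard = (Y \ Dn).ncard + 1 := by
        rw [himg, Set.ncard_insert_of_notMem hnotmem (Set.toFinite _),
          Set.ncard_image_of_injOn hinj]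
      have h2 : (Y \ Dn).ncard = Y.ncard - (mC + 1) := by
        rw [show Y \ Dn = Y \ (Y ∩ Dn) from by
            ext x; simp only [Set.mem_diff, Set.mem_inter_iff]; tauto,
          Set.ncard_diff Set.inter_subset_left (Set.toFinite _), hYDncard]
      have h3 : mC + 1 ≤ Y.ncard := by
        rw [← hYDncard]
        exact Set.ncard_le_ncard Set.inter_subset_left hYfin
      omega
    -- apply induction hypothesis
    have hDn2 : 2 ≤ Dn.ncard := by
      have : ({z, e} : Set S) ⊆ Dn := by
        rintro x (rfl | rfl)
        exacts [hzD, heD]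
      calc 2 = ({z, e} : Set S).ncard := by
            rw [Set.ncard_insert_of_notMem (by simpa using (Ne.symm hez)) (Set.toFinite _),
              Set.ncard_singleton]
        _ ≤ Dn.ncard := Set.ncard_le_ncard this (Set.toFinite _)
    have hcardT_le : Fintype.card T ≤ n := by omega
    have hIH := IH T _iT _fT hcardT_le hindT (π z) hzT Yb hclosb hidemb hcommb hzYb
    -- the class sits inside Dn, above z
    have hIC : Cls.ncard + 1 ≤ Dn.ncard := by
      have hsub : insert z Cls ⊆ Dn := by
        rintro x (rfl | hx)
        exacts [hzD, hx.1]
      calc Cls.ncard + 1 = (insert z Cls).ncard := by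
            rw [Set.ncard_insert_of_notMem hzCls (Set.toFinite _)]
        _ ≤ Dn.ncard := Set.ncard_le_ncard hsub (Set.toFinite _)
    -- final arithmetic
    have hkey : Y.ncard = Yb.ncard + mC := hYbcard.symm
    have hYbpos : 1 ≤ Yb.ncard := (Set.ncard_pos (Set.toFinite _)).mpr ⟨π z, hzYb⟩
    omega
section
variable {S : Type u} [Semigroup S]

/-- reflexive closure of the principal downset -/
def Dc (x : S) : Set S := insert x {w | jdvd w x}

lemma Dc_ideal (x : S) : IsIdeal (Dc x) := by
  rintro w (rfl | hw) s
  · exact ⟨Or.inr (Or.inr (Or.inr (Or.inl ⟨s, rfl⟩))),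
      Or.inr (Or.inr (Or.inl ⟨s, rfl⟩))⟩
  · exact ⟨Or.inr (jdvd_mul_left s hw), Or.inr (jdvd_mul_right s hw)⟩

lemma Dc_trans {a b : S} (h : a ∈ Dc b) : Dc a ⊆ Dc b := by
  rintro w (rfl | hw)
  · exact h
  · rcases h with rfl | hb
    · exact Or.inr hw
    · exact Or.inr (jdvd_trans hw hb)

theorem final_bound [Fintype S]
    (hS : SemilatticeIndecomposable S)
    (Y : Set S) (hclos : ∀ a ∈ Y, ∀ b ∈ Y, a * b ∈ Y) (hidem : ∀ a ∈ Y, a * a = a)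
    (hcomm : ∀ a ∈ Y, ∀ b ∈ Y, a * b = b * a) :
    Y.ncard ≤ 2 * ((Fintype.card S - 1) / 4) + 1 := by
  classical
  have hind : IndecS S := indecS_of hS
  by_cases hY1 : Y.ncard ≤ 1
  · omega
  push_neg at hY1
  obtain ⟨y0, hy0⟩ : Y.Nonempty := by
    rcases Set.eq_empty_or_nonempty Y with rfl | h
    · simp [Set.ncard_empty] at hY1
    · exact h
  -- minimal ideal
  obtain ⟨x0, -, hmin⟩ := Set.exists_min_image (Set.univ : Set S)
    (fun x => (Dc x).ncard) (Set.toFinite _) ⟨y0, trivial⟩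
  set K := Dc x0 with hK
  have hKmin : ∀ a ∈ K, Dc a = K := by
    intro a ha
    have hsub : Dc a ⊆ K := Dc_trans ha
    have hle := hmin a trivial
    exact Set.eq_of_subset_of_ncard_le hsub hle (Set.toFinite _)
  have hmut : ∀ a ∈ K, ∀ b ∈ K, b ∈ Dc a := by
    intro a ha b hb
    rw [hKmin a ha]
    exact hb
  -- at most one element of Y in K
  have hK3 : ∀ e ∈ Y ∩ K, ∀ f ∈ Y ∩ K, e = f := by
    rintro e ⟨heY, heK⟩ f ⟨hfY, hfK⟩
    have hee := hidem e heY
    have hff := hidem f hfY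
    have hefY : e * f ∈ Y := hclos e heY f hfY
    have hefK : e * f ∈ K := ((Dc_ideal x0) e heK f).2
    -- step 1 : e = e * f
    have h1 : e * f = e := by
      rcases hmut (e*f) hefK e heK with heq | hj
      · exact heq.symm
      · refine (natural_order_eq (hidem _ hefY) hee ?_ ?_ (idem_dvd2 hee hj)).symm
        · -- (e*f)*e = e*f
          rw [hcomm (e*f) hefY e heY, ← mul_assoc, hee]
        · -- e*(e*f) = e*f
          rw [← mul_assoc, hee]
    -- step 2 : f = e
    rcases hmut e heK f hfK with heq | hj
    · exact heq.symm
    · exact (natural_order_eq hee hff h1 (by rw [hcomm f hfY e heY, h1]) (idem_dvd2 hff hj)).symm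
  -- quotient by K
  obtain ⟨T, _iT, _fT, π, hhom, hsurj, heqv, hcardT⟩ :=
    rees_pack K (Dc_ideal x0) ⟨x0, Set.mem_insert _ _⟩
  have hx0K : x0 ∈ K := Set.mem_insert _ _
  have hindT : IndecS T := transfer_indec K (Dc_ideal x0) ⟨x0, hx0K⟩ π hhom hsurj heqv hind
  have hzT : ∀ t, π x0 * t = π x0 ∧ t * π x0 = π x0 := by
    intro t
    obtain ⟨x, rfl⟩ := hsurj t
    constructor
    · rw [← hhom]
      exact (heqv _ _).mpr (Or.inr ⟨((Dc_ideal x0) x0 hx0K x).2, hx0K⟩)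
    · rw [← hhom]
      exact (heqv _ _).mpr (Or.inr ⟨((Dc_ideal x0) x0 hx0K x).1, hx0K⟩)
  set Yb : Set T := insert (π x0) (π '' Y) with hYb
  have hmemK : ∀ x : S, ∀ k ∈ K, π (x * k) = π x0 ∧ π (k * x) = π x0 := by
    intro x k hk
    exact ⟨(heqv _ _).mpr (Or.inr ⟨((Dc_ideal x0) k hk x).1, hx0K⟩),
      (heqv _ _).mpr (Or.inr ⟨((Dc_ideal x0) k hk x).2, hx0K⟩)⟩
  have hclosb : ∀ a ∈ Yb, ∀ b ∈ Yb, a * b ∈ Yb := by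
    rintro a (rfl | ⟨x, hx, rfl⟩) b hb
    · rcases hb with rfl | ⟨y, hy, rfl⟩
      · rw [← hhom]
        exact Or.inl (hmemK x0 x0 hx0K).1
      · rw [← hhom]
        exact Or.inl (hmemK y x0 hx0K).2
    · rcases hb with rfl | ⟨y, hy, rfl⟩
      · rw [← hhom]
        exact Or.inl (hmemK x x0 hx0K).1
      · exact Or.inr ⟨x * y, hclos x hx y hy, hhom x y⟩
  have hidemb : ∀ a ∈ Yb, a * a = a := by
    rintro a (rfl | ⟨x, hx, rfl⟩)
    · rw [← hhom]
      exact (hmemK x0 x0 hx0K).1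
    · rw [← hhom, hidem x hx]
  have hcommb : ∀ a ∈ Yb, ∀ b ∈ Yb, a * b = b * a := by
    rintro a (rfl | ⟨x, hx, rfl⟩) b hb
    · rcases hb with rfl | ⟨y, hy, rfl⟩
      · rfl
      · rw [← hhom, ← hhom, (hmemK y x0 hx0K).2, (hmemK y x0 hx0K).1]
    · rcases hb with rfl | ⟨y, hy, rfl⟩
      · rw [← hhom, ← hhom, (hmemK x x0 hx0K).2, (hmemK x x0 hx0K).1]
      · rw [← hhom, ← hhom, hcomm x hx y hy]
  have hcore := core (Fintype.card T) T _iT _fT (le_refl _) hindT (π x0) hzT Yb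
    hclosb hidemb hcommb (Set.mem_insert _ _)
  -- Y injects into Yb
  have hinjY : Set.InjOn π Y := by
    intro a ha b hb hab
    rcases (heqv a b).mp hab with h | ⟨h1, h2⟩
    · exact h
    · exact hK3 a ⟨ha, h1⟩ b ⟨hb, h2⟩
  have hYle : Y.ncard ≤ Yb.ncard := by
    calc Y.ncard = (π '' Y).ncard := (Set.ncard_image_of_injOn hinjY).symm
      _ ≤ Yb.ncard := Set.ncard_le_ncard (Set.subset_insert _ _) (Set.toFinite _)
  have hK1 : 1 ≤ K.ncard := (Set.ncard_pos (Set.toFinite _)).mpr ⟨x0, hx0K⟩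
  omega

end

/-- If `S` is a finite semilattice indecomposable semigroup (not necessarily with zero) and `Y` is a
subsemilattice of `S`, then `|Y| ≤ 2⌊(|S|-1)/4⌋ + 1`. -/
theorem stmt_11 {S : Type u} [Semigroup S] [Fintype S]
    (hS : SemilatticeIndecomposable S)
    (Y : Set S) (hY : IsSubsemilattice Y) :
    Y.ncard ≤ 2 * ((Fintype.card S - 1) / 4) + 1 := by
  obtain ⟨hclos, hidem, hcomm⟩ := hY
  exact final_bound hS Y hclos hidem hcomm
end

section
/- Every finite semilattice indecomposable semigroup S that contains a subsemilattice of cardinality 2⌊(|S|−1)/4⌋ + 1 and satisfies |S| ≡ 1 (mod 4) has a zero element. -/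
universe u

/-- A two-element-style semilattice carrier in universe `u` (propositions under `∧`). -/
structure PropU : Type u where
  p : Prop

instance : Semigroup PropU.{u} where
  mul a b := ⟨a.p ∧ b.p⟩
  mul_assoc a b c := congrArg PropU.mk (propext and_assoc)

theorem PropU.comm : ∀ a b : PropU.{u}, a * b = b * a :=
  fun _ _ => congrArg PropU.mk (propext and_comm)

theorem PropU.idem : ∀ a : PropU.{u}, a * a = a :=
  fun _ => congrArg PropU.mk (propext ⟨fun h => h.1, fun h => ⟨h, h⟩⟩)

/-- In a semilattice indecomposable semigroup, any nonempty subset closed under products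
and under extraction of factors is everything. -/
theorem filter_eq_univ {S : Type u} [Semigroup S] (hS : SemilatticeIndecomposable S)
    (F : Set S) (hne : F.Nonempty)
    (hmul : ∀ a b : S, a ∈ F → b ∈ F → a * b ∈ F)
    (hext : ∀ a b : S, a * b ∈ F → a ∈ F ∧ b ∈ F) :
    ∀ x : S, x ∈ F := by
  obtain ⟨w, hw⟩ := hne
  intro x
  let f : S →ₙ* PropU.{u} :=
    ⟨fun x => ⟨x ∈ F⟩, fun a b =>
      congrArg PropU.mk (propext ⟨fun h => hext a b h, fun h => hmul a b h.1 h.2⟩)⟩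
  have hfc := hS PropU.{u} PropU.comm PropU.idem f x w
  have hp : (x ∈ F) = (w ∈ F) := congrArg PropU.p hfc
  exact hp ▸ hw

/-- Core counting lemma: if `Y` is a subsemilattice with a bottom-absorbing element `e`
(on the right), and `e` is not a left zero, then `|Y| ≤ |S ∖ Y|`. -/
theorem core_count {S : Type u} [Semigroup S] [Fintype S]
    (hS : SemilatticeIndecomposable S)
    (Y : Set S) (hYi : ∀ a ∈ Y, a * a = a) (hYcm : ∀ a ∈ Y, ∀ b ∈ Y, a * b = b * a)
    (e : S) (hemin' : ∀ y ∈ Y, y * e = e)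
    (hL : ∃ x : S, e * x ≠ e) :
    Y.ncard ≤ (Yᶜ : Set S).ncard := by
  classical
  obtain ⟨x₀, hx₀⟩ := hL
  have hA : ∀ y ∈ Y, ∃ r, r ∉ Y ∧ y * r = r ∧ ∃ s, r * s = y := by
    intro y hy
    by_contra hno
    push_neg at hno
    have hidem : y * y = y := hYi y hy
    have hext : ∀ a b : S, a * b ∈ {u : S | y * u = y} →
        a ∈ {u : S | y * u = y} ∧ b ∈ {u : S | y * u = y} := by
      intro a b hab
      have hab' : y * (a * b) = y := hab
      have h1 : y * (y * a) = y * a := by rw [← mul_assoc, hidem]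
      have h2 : (y * a) * b = y := by rw [mul_assoc]; exact hab'
      by_cases hwY : y * a ∈ Y
      · have h3 : (y * a) * y = y := by
          calc (y * a) * y = (y * a) * ((y * a) * b) := by rw [h2]
            _ = ((y * a) * (y * a)) * b := by rw [← mul_assoc]
            _ = (y * a) * b := by rw [hYi _ hwY]
            _ = y := h2
        have hya : y * a = y := by
          calc y * a = y * (y * a) := h1.symm
            _ = (y * a) * y := hYcm y hy _ hwY
            _ = y := h3
        refine ⟨hya, ?_⟩
        show y * b = y
        calc y * b = (y * a) * b := by rw [hya]
          _ = y := h2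
      · exact absurd h2 (hno _ hwY h1 b)
    have filt := filter_eq_univ hS {u : S | y * u = y} ⟨y, hidem⟩
      (fun a b ha hb => by
        show y * (a * b) = y
        rw [← mul_assoc, show y * a = y from ha]; exact hb) hext
    have h4 : y * e = y := filt e
    have h5 : y = e := by
      calc y = y * e := h4.symm
        _ = e := hemin' y hy
    exact hx₀ (by rw [← h5]; exact filt x₀)
  -- build the injection
  let F : S → S := fun y => if hy : y ∈ Y then (hA y hy).choose else y
  have hspec : ∀ y (hy : y ∈ Y), F y ∉ Y ∧ y * F y = F y ∧ ∃ s, F y * s = y := by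
    intro y hy
    simp only [F, dif_pos hy]
    exact (hA y hy).choose_spec
  have hmapsto : ∀ y ∈ Y, F y ∈ (Yᶜ : Set S) := fun y hy => (hspec y hy).1
  have hinj : Set.InjOn F Y := by
    intro y hy z hz hfe
    obtain ⟨-, hyr, s, hs⟩ := hspec y hy
    obtain ⟨-, hzr, t, ht⟩ := hspec z hz
    rw [hfe] at hyr hs
    have h1 : y * z = z := by rw [← ht, ← mul_assoc, hyr]
    have h2 : z * y = y := by rw [← hs, ← mul_assoc, hzr]
    calc y = z * y := h2.symm
      _ = y * z := (hYcm y hy z hz).symm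
      _ = z := h1
  exact Set.ncard_le_ncard_of_injOn F hmapsto hinj (Set.toFinite _)

/-- A finite semilattice indecomposable semigroup `S` with `|S| ≡ 1 (mod 4)` containing a
subsemilattice of cardinality `2⌊(|S|-1)/4⌋ + 1` has a zero element. -/
theorem stmt_18 {S : Type u} [Semigroup S] [Fintype S]
    (hS : SemilatticeIndecomposable S)
    (hmod : Fintype.card S % 4 = 1)
    (Y : Set S) (hY : IsSubsemilattice Y)
    (hcard : Y.ncard = 2 * ((Fintype.card S - 1) / 4) + 1) :
    ∃ z : S, ∀ x : S, z * x = z ∧ x * z = z := by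
  classical
  obtain ⟨hYc, hYi, hYcm⟩ := hY
  have hYfin : Y.Finite := Y.toFinite
  have hYne : Y.Nonempty := by
    apply Set.nonempty_of_ncard_ne_zero
    rw [hcard]; omega
  -- a minimum (absorbing) element of Y
  have key : ∀ A : Finset S, (↑A : Set S) ⊆ Y → ∃ e ∈ Y, ∀ y ∈ A, e * y = e := by
    intro A
    induction A using Finset.induction_on with
    | empty =>
      intro _
      obtain ⟨w, hw⟩ := hYne
      exact ⟨w, hw, fun y hy => absurd hy (Finset.notMem_empty y)⟩
    | @insert a B haB ih =>
      intro hsub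
      have haY : a ∈ Y := hsub (by simp)
      have hBY : (↑B : Set S) ⊆ Y := fun x hx => hsub (by
        simp only [Finset.coe_insert, Set.mem_insert_iff]
        exact Or.inr hx)
      obtain ⟨e', he'Y, he'⟩ := ih hBY
      refine ⟨e' * a, hYc e' he'Y a haY, ?_⟩
      intro y hy
      rcases Finset.mem_insert.mp hy with rfl | h
      · rw [mul_assoc, hYi y haY]
      · have hyY : y ∈ Y := hBY (Finset.mem_coe.mpr h)
        rw [mul_assoc, hYcm a haY y hyY, ← mul_assoc, he' y h]
  obtain ⟨e, heY, he⟩ := key hYfin.toFinset (by rw [Set.Finite.coe_toFinset])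
  have hemin : ∀ y ∈ Y, e * y = e := fun y hy => he y (hYfin.mem_toFinset.mpr hy)
  have hemin' : ∀ y ∈ Y, y * e = e := fun y hy => by
    rw [hYcm y hy e heY]; exact hemin y hy
  by_cases hzero : ∀ x : S, e * x = e ∧ x * e = e
  · exact ⟨e, hzero⟩
  · exfalso
    have hcompl : Y.ncard + (Yᶜ : Set S).ncard = Fintype.card S := by
      rw [← Nat.card_eq_fintype_card]
      exact Set.ncard_add_ncard_compl Y
    by_cases hL : ∃ x : S, e * x ≠ e
    · have hc := core_count hS Y hYi hYcm e hemin' hL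
      omega
    · push_neg at hL
      have hR : ∃ x : S, x * e ≠ e := by
        by_contra h
        push_neg at h
        exact hzero (fun x => ⟨hL x, h x⟩)
      -- pass to the opposite semigroup
      haveI : Fintype Sᵐᵒᵖ := Fintype.ofEquiv S MulOpposite.opEquiv
      have hSop : SemilatticeIndecomposable Sᵐᵒᵖ := by
        intro T _ hcomm hidem f x y
        let g : S →ₙ* T :=
          ⟨fun s => f (MulOpposite.op s), fun a b => by
            show f (MulOpposite.op (a * b)) = f (MulOpposite.op a) * f (MulOpposite.op b)
            rw [MulOpposite.op_mul, map_mul, hcomm]⟩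
        have := hS T hcomm hidem g x.unop y.unop
        simpa [g] using this
      set Y' : Set Sᵐᵒᵖ := MulOpposite.unop ⁻¹' Y with hY'def
      have hY'i : ∀ a ∈ Y', a * a = a := by
        intro a ha
        apply MulOpposite.unop_injective
        exact hYi a.unop ha
      have hY'cm : ∀ a ∈ Y', ∀ b ∈ Y', a * b = b * a := by
        intro a ha b hb
        apply MulOpposite.unop_injective
        show b.unop * a.unop = a.unop * b.unop
        exact hYcm b.unop hb a.unop ha
      have hemin'op : ∀ y ∈ Y', y * MulOpposite.op e = MulOpposite.op e := by
        intro y hy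
        apply MulOpposite.unop_injective
        show e * y.unop = e
        exact hemin y.unop hy
      have hL' : ∃ x : Sᵐᵒᵖ, MulOpposite.op e * x ≠ MulOpposite.op e := by
        obtain ⟨x₀, hx₀⟩ := hR
        refine ⟨MulOpposite.op x₀, fun h => hx₀ ?_⟩
        have := congrArg MulOpposite.unop h
        simpa using this
      have hc := core_count hSop Y' hY'i hY'cm (MulOpposite.op e) hemin'op hL'
      have himg : Y' = MulOpposite.op '' Y := by
        ext a
        constructor
        · intro h
          exact ⟨a.unop, h, MulOpposite.op_unop a⟩
        · rintro ⟨b, hb, rfl⟩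
          simpa [hY'def] using hb
      have himgc : (Y'ᶜ : Set Sᵐᵒᵖ) = MulOpposite.op '' (Yᶜ) := by
        ext a
        constructor
        · intro h
          exact ⟨a.unop, h, MulOpposite.op_unop a⟩
        · rintro ⟨b, hb, rfl⟩
          simpa [hY'def] using hb
      rw [himgc, himg, Set.ncard_image_of_injective _ MulOpposite.op_injective,
        Set.ncard_image_of_injective _ MulOpposite.op_injective] at hc
      omega
end
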